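/- For every (x1, x3, x5) ∈ [1, ∞)³, there exists exactly one triple (x2, x4, x6) ∈ (1/2, ∞)³ satisfying the system (E): x1 = 2·x2·x4 − (1/2)·(x2/x4 + x4/x2), x3 = 2·x4·x6 − (1/2)·(x4/x6 + x6/x4), x5 = 2·x2·x6 − (1/2)·(x2/x6 + x6/x2). (Hence every decorated 3-1 type hyperbolic tetrahedron whose ideal vertex triangle is an equilateral triangle of side length 1 is uniquely determined by the lengths of its three hyper-ideal edges.) -/

import Mathlib

noncomputable section
namespace Stmt6Aux

def fE (a b : ℝ) : ℝ := 2*a*b - (1/2)*(a/b + b/a)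

def gE (x a : ℝ) : ℝ := a * (x + Real.sqrt (x^2 + 4*a^2 - 1)) / (4*a^2 - 1)

lemma fE_symm (a b : ℝ) : fE a b = fE b a := by unfold fE; ring

lemma fE_mono {a b b' : ℝ} (ha : 1/2 < a) (hb : 1/2 < b) (hb' : 1/2 < b')
    (h : b < b') : fE a b < fE a b' := by
  have ha0 : (0:ℝ) < a := by linarith
  have hb0 : (0:ℝ) < b := by linarith
  have hb'0 : (0:ℝ) < b' := by linarith
  have key : fE a b' - fE a b
      = (b'-b)*((4*a^2-1)/(2*a)) + (a/2)*((b'-b)/(b*b')) := by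
    unfold fE
    field_simp
    ring
  have h1 : 0 < (b'-b)*((4*a^2-1)/(2*a)) := by
    apply mul_pos (by linarith)
    apply div_pos (by nlinarith) (by linarith)
  have h2 : 0 < (a/2)*((b'-b)/(b*b')) := by
    apply mul_pos (by linarith)
    apply div_pos (by linarith) (by positivity)
  linarith

lemma fE_inj {a b b' : ℝ} (ha : 1/2 < a) (hb : 1/2 < b) (hb' : 1/2 < b')
    (h : fE a b = fE a b') : b = b' := by
  rcases lt_trichotomy b b' with hlt | heq | hgt
  · exact absurd h (ne_of_lt (fE_mono ha hb hb' hlt))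
  · exact heq
  · exact absurd h.symm (ne_of_lt (fE_mono ha hb' hb hgt))

lemma g_pos {x a : ℝ} (hx : 1 ≤ x) (ha : 1/2 < a) : 1/2 < gE x a := by
  have hd : (0:ℝ) < 4*a^2-1 := by nlinarith
  have hs : 2*a ≤ Real.sqrt (x^2 + 4*a^2 - 1) := by
    have h := Real.sqrt_le_sqrt (show (2*a)^2 ≤ x^2+4*a^2-1 by nlinarith)
    rwa [Real.sqrt_sq (by linarith)] at h
  unfold gE
  rw [lt_div_iff₀ hd]
  nlinarith

lemma g_eq {x a : ℝ} (hx : 1 ≤ x) (ha : 1/2 < a) : fE a (gE x a) = x := by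
  have hd : (0:ℝ) < 4*a^2-1 := by nlinarith
  have hbp := g_pos hx ha
  have ha0 : a ≠ 0 := by intro h; rw [h] at ha; norm_num at ha
  have hb0 : gE x a ≠ 0 := by intro h; rw [h] at hbp; norm_num at hbp
  have hs0 : 0 ≤ Real.sqrt (x^2 + 4*a^2 - 1) := Real.sqrt_nonneg _
  have hs2 : (Real.sqrt (x^2 + 4*a^2 - 1))^2 = x^2 + 4*a^2 - 1 :=
    Real.sq_sqrt (by nlinarith)
  set s := Real.sqrt (x^2 + 4*a^2 - 1) with hsdef
  have hbdef : gE x a * (4*a^2-1) = a * (x + s) := by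
    unfold gE
    rw [div_mul_cancel₀ _ (ne_of_gt hd)]
  have hkey : (4*a^2-1) * (gE x a)^2 = 2*a*x*(gE x a) + a^2 := by
    have h2 : (gE x a * (4*a^2-1))^2 = (a * (x + s))^2 := by rw [hbdef]
    have h3 : (4*a^2-1) * ((4*a^2-1) * (gE x a)^2)
        = (4*a^2-1) * (2*a*x*(gE x a) + a^2) := by
      have : (4*a^2-1) * (2*a*x*(gE x a)) = 2*a*x*(a*(x+s)) := by
        rw [← hbdef]; ring
      nlinarith [h2, hs2, this]
    exact mul_left_cancel₀ (ne_of_gt hd) h3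
  unfold fE
  field_simp
  linear_combination hkey

lemma g_le_one {x a : ℝ} (hx : 1 ≤ x) (ha : x + 1 ≤ a) : gE x a ≤ 1 := by
  have ha2 : (2:ℝ) ≤ a := by linarith
  have hd : (0:ℝ) < 4*a^2-1 := by nlinarith
  have hs : Real.sqrt (x^2 + 4*a^2 - 1) ≤ x + 2*a := by
    rw [show x + 2*a = Real.sqrt ((x+2*a)^2) by rw [Real.sqrt_sq (by nlinarith)]]
    exact Real.sqrt_le_sqrt (by nlinarith)
  have hs0 : 0 ≤ Real.sqrt (x^2 + 4*a^2 - 1) := Real.sqrt_nonneg _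
  unfold gE
  rw [div_le_one hd]
  nlinarith

lemma g_lower {x y : ℝ} (hx : 1 ≤ x) (hy : 1 ≤ y) :
    y ≤ gE x (Real.sqrt (1 + 1/(2*y)) / 2) := by
  have hy0 : (0:ℝ) < y := by linarith
  have ht : (0:ℝ) < 1/(2*y) := by positivity
  set t := 1/(2*y) with htdef
  set a := Real.sqrt (1 + t) / 2 with hadef
  have hsq : (Real.sqrt (1+t))^2 = 1 + t := Real.sq_sqrt (by linarith)
  have ha2 : 4*a^2 - 1 = t := by rw [hadef]; field_simp; nlinarith [hsq]
  have hage : 1/2 ≤ a := by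
    rw [hadef]
    have h := Real.sqrt_le_sqrt (show (1:ℝ) ≤ 1 + t by linarith)
    rw [Real.sqrt_one] at h
    linarith
  have hs0 : 0 ≤ Real.sqrt (x^2 + 4*a^2 - 1) := Real.sqrt_nonneg _
  have hyt : y * t = 1/2 := by rw [htdef]; field_simp
  unfold gE
  rw [ha2, le_div_iff₀ ht]
  nlinarith

lemma fE_le_one {b c : ℝ} (hb : 1/2 < b) (hb1 : b ≤ 1) (hc : 1/2 < c)
    (hc1 : c ≤ 1) : fE b c ≤ 1 := by
  have hb0 : (0:ℝ) < b := by linarith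
  have hc0 : (0:ℝ) < c := by linarith
  have h2 : 2 ≤ b/c + c/b := by
    rw [div_add_div _ _ (ne_of_gt hc0) (ne_of_gt hb0), le_div_iff₀ (by positivity)]
    nlinarith [sq_nonneg (b - c)]
  unfold fE
  nlinarith

lemma fE_ge {y b c : ℝ} (hy : 1 ≤ y) (hb : y ≤ b) (hc : y ≤ c) : y ≤ fE b c := by
  have h1 : b/c ≤ b := div_le_self (by linarith) (by linarith)
  have h2 : c/b ≤ c := div_le_self (by linarith) (by linarith)
  unfold fE
  nlinarith

lemma g_contOn (x : ℝ) {S : Set ℝ} (hS : ∀ a ∈ S, 1/2 < a) :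
    ContinuousOn (fun a => gE x a) S := by
  unfold gE
  apply ContinuousOn.div
  · exact (continuous_id.mul (continuous_const.add
      (Real.continuous_sqrt.comp (by continuity)))).continuousOn
  · exact (by continuity : Continuous fun a : ℝ => 4*a^2-1).continuousOn
  · intro a haS
    have := hS a haS
    nlinarith

lemma fE_mono' {a a' b : ℝ} (ha : 1/2 < a) (ha' : 1/2 < a') (hb : 1/2 < b)
    (h : a < a') : fE a b < fE a' b := by
  rw [fE_symm a b, fE_symm a' b]; exact fE_mono hb ha ha' h

lemma lt_of_fE_lt {a b b' : ℝ} (ha : 1/2 < a) (hb : 1/2 < b) (hb' : 1/2 < b')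
    (h : fE a b < fE a b') : b < b' := by
  rcases lt_trichotomy b b' with hlt | heq | hgt
  · exact hlt
  · rw [heq] at h; exact absurd h (lt_irrefl _)
  · exact absurd (fE_mono ha hb' hb hgt) (not_lt.mpr (le_of_lt h))

lemma sols_eq {a b c a' b' c' : ℝ} (ha : 1/2 < a) (hb : 1/2 < b) (hc : 1/2 < c)
    (ha' : 1/2 < a') (hb' : 1/2 < b') (hc' : 1/2 < c')
    (e1 : fE a b = fE a' b') (e2 : fE b c = fE b' c') (e3 : fE a c = fE a' c') :
    a = a' ∧ b = b' ∧ c = c' := by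
  have haa : a = a' := by
    rcases lt_trichotomy a a' with hlt | heq | hgt
    · exfalso
      have hbb : b' < b := by
        apply lt_of_fE_lt ha hb' hb
        calc fE a b' < fE a' b' := fE_mono' ha ha' hb' hlt
        _ = fE a b := e1.symm
      have hcc : c' < c := by
        apply lt_of_fE_lt ha hc' hc
        calc fE a c' < fE a' c' := fE_mono' ha ha' hc' hlt
        _ = fE a c := e3.symm
      have : fE b' c' < fE b c :=
        lt_trans (fE_mono' hb' hb hc' hbb) (fE_mono hb hc' hc hcc)
      rw [← e2] at this
      exact absurd this (lt_irrefl _)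
    · exact heq
    · exfalso
      have hbb : b < b' := by
        apply lt_of_fE_lt ha' hb hb'
        calc fE a' b < fE a b := fE_mono' ha' ha hb hgt
        _ = fE a' b' := e1
      have hcc : c < c' := by
        apply lt_of_fE_lt ha' hc hc'
        calc fE a' c < fE a c := fE_mono' ha' ha hc hgt
        _ = fE a' c' := e3
      have : fE b c < fE b' c' :=
        lt_trans (fE_mono' hb hb' hc hbb) (fE_mono hb' hc hc' hcc)
      rw [e2] at this
      exact absurd this (lt_irrefl _)
  subst haa
  have hbb := fE_inj ha hb hb' e1
  refine ⟨rfl, hbb, fE_inj hb hc hc' ?_⟩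
  rw [hbb] at e2 ⊢
  exact e2

end Stmt6Aux

open Stmt6Aux in
/-- For every (x1,x3,x5) ∈ [1,∞)³ there is exactly one
(x2,x4,x6) ∈ (1/2,∞)³ solving the system (E). -/
theorem stmt_6 (x1 x3 x5 : ℝ) (h1 : 1 ≤ x1) (h3 : 1 ≤ x3) (h5 : 1 ≤ x5) :
    ∃! p : ℝ × ℝ × ℝ,
      1/2 < p.1 ∧ 1/2 < p.2.1 ∧ 1/2 < p.2.2 ∧
      x1 = 2 * p.1 * p.2.1 - (1/2) * (p.1 / p.2.1 + p.2.1 / p.1) ∧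
      x3 = 2 * p.2.1 * p.2.2 - (1/2) * (p.2.1 / p.2.2 + p.2.2 / p.2.1) ∧
      x5 = 2 * p.1 * p.2.2 - (1/2) * (p.1 / p.2.2 + p.2.2 / p.1) := by
  have hx30 : (0:ℝ) < x3 := by linarith
  set a0 : ℝ := Real.sqrt (1 + 1/(2*x3)) / 2 with ha0def
  set a1 : ℝ := max x1 x5 + 1 with ha1def
  have ht : (0:ℝ) < 1/(2*x3) := by positivity
  have ht2 : 1/(2*x3) ≤ 1/2 := by
    rw [div_le_div_iff₀ (by linarith) (by norm_num)]; linarith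
  have ha0half : 1/2 < a0 := by
    have h := Real.sqrt_lt_sqrt (show (0:ℝ) ≤ 1 by norm_num)
      (show (1:ℝ) < 1 + 1/(2*x3) by linarith)
    rw [Real.sqrt_one] at h
    rw [ha0def]; linarith
  have ha0lt1 : a0 < 1 := by
    have h4 : Real.sqrt 4 = 2 := by
      rw [show (4:ℝ) = 2^2 by norm_num, Real.sqrt_sq (by norm_num)]
    have h := Real.sqrt_lt_sqrt (show (0:ℝ) ≤ 1 + 1/(2*x3) by linarith)
      (show 1 + 1/(2*x3) < 4 by linarith)
    rw [h4] at h
    rw [ha0def]; linarith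
  have ha1x1 : x1 + 1 ≤ a1 := by
    rw [ha1def]; have := le_max_left x1 x5; linarith
  have ha1x5 : x5 + 1 ≤ a1 := by
    rw [ha1def]; have := le_max_right x1 x5; linarith
  have ha1half : 1/2 < a1 := by linarith
  have ha01 : a0 ≤ a1 := by linarith
  have hdomain : ∀ a ∈ Set.Icc a0 a1, 1/2 < a :=
    fun a ha => lt_of_lt_of_le ha0half ha.1
  set H : ℝ → ℝ := fun a => fE (gE x1 a) (gE x5 a) with hHdef
  have hHcont : ContinuousOn H (Set.Icc a0 a1) := by
    have hg1 := g_contOn x1 hdomain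
    have hg2 := g_contOn x5 hdomain
    have hne1 : ∀ a ∈ Set.Icc a0 a1, gE x1 a ≠ 0 :=
      fun a ha => ne_of_gt (lt_trans (by norm_num) (g_pos h1 (hdomain a ha)))
    have hne2 : ∀ a ∈ Set.Icc a0 a1, gE x5 a ≠ 0 :=
      fun a ha => ne_of_gt (lt_trans (by norm_num) (g_pos h5 (hdomain a ha)))
    show ContinuousOn (fun a => 2*gE x1 a*gE x5 a
      - (1/2)*(gE x1 a/gE x5 a + gE x5 a/gE x1 a)) (Set.Icc a0 a1)
    exact ((continuousOn_const.mul hg1).mul hg2).sub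
      (continuousOn_const.mul ((hg1.div hg2 hne2).add (hg2.div hg1 hne1)))
  have hHa0 : x3 ≤ H a0 := fE_ge h3 (g_lower h1 h3) (g_lower h5 h3)
  have hHa1 : H a1 ≤ x3 := by
    have hb1 : gE x1 a1 ≤ 1 := g_le_one h1 ha1x1
    have hb5 : gE x5 a1 ≤ 1 := g_le_one h5 ha1x5
    have := fE_le_one (g_pos h1 ha1half) hb1 (g_pos h5 ha1half) hb5
    linarith
  obtain ⟨a, haIcc, hHa⟩ :=
    intermediate_value_Icc' ha01 hHcont (Set.mem_Icc.mpr ⟨hHa1, hHa0⟩)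
  have haa : 1/2 < a := hdomain a haIcc
  have hHa' : fE (gE x1 a) (gE x5 a) = x3 := hHa
  have hgb := g_pos h1 haa
  have hgc := g_pos h5 haa
  refine ⟨⟨a, gE x1 a, gE x5 a⟩, ⟨haa, hgb, hgc, (g_eq h1 haa).symm,
    hHa'.symm, (g_eq h5 haa).symm⟩, ?_⟩
  rintro ⟨a', b', c'⟩ ⟨ha', hb', hc', he1, he2, he3⟩
  have := sols_eq ha' hb' hc' haa hgb hgc
    (show fE a' b' = fE a (gE x1 a) by rw [g_eq h1 haa]; exact he1.symm)
    (show fE b' c' = fE (gE x1 a) (gE x5 a) by rw [hHa']; exact he2.symm)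
    (show fE a' c' = fE a (gE x5 a) by rw [g_eq h5 haa]; exact he3.symm)
  simp only [Prod.mk.injEq]
  exact this
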